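/- Let n ∈ ℝ² be a unit vector, let v ∈ ℝ² be nonzero with v · n = 0, and let g, w ∈ ℝ² satisfy (D(v) g) · n = 0 and (D(v) w) · n = 0. Then [(Ê(v) ⊗ g) w] · n = 0, i.e., Σ_{k=1}^{2} n_k Σ_{i=1}^{2} (Σ_{j=1}^{2} ∂_{v_k} D_{ij}(v) g_j) w_i = 0. -/

import Mathlib

open scoped BigOperators

/-- Euclidean norm of a vector in ℝ². -/
noncomputable def norm2 (v : Fin 2 → ℝ) : ℝ := Real.sqrt (∑ i, v i ^ 2)

/-- The 2D Bear–Scheidegger diffusion–dispersion tensor. -/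
noncomputable def bsD (φ dm dt dl : ℝ) (v : Fin 2 → ℝ) (i j : Fin 2) : ℝ :=
  (φ * dm + dt * norm2 v) * (if i = j then (1 : ℝ) else 0) + (dl - dt) * v i * v j / norm2 v

/-- The partial derivative `∂_{v_k} D_{ij}(v)`. -/
noncomputable def pD (φ dm dt dl : ℝ) (v : Fin 2 → ℝ) (i j k : Fin 2) : ℝ :=
  fderiv ℝ (fun u => bsD φ dm dt dl u i j) v (Pi.single k 1)

lemma sum_sq_pos (v : Fin 2 → ℝ) (hv : v ≠ 0) : 0 < ∑ i, v i ^ 2 := by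
  rcases Function.ne_iff.mp hv with ⟨i, hi⟩
  apply Finset.sum_pos' (fun j _ => sq_nonneg _)
  exact ⟨i, Finset.mem_univ i, by
    rcases (sq_nonneg (v i)).lt_or_eq with h | h
    · exact h
    · exact absurd (by simpa [pow_eq_zero_iff] using h.symm) hi⟩

lemma norm2_pos (v : Fin 2 → ℝ) (hv : v ≠ 0) : 0 < norm2 v :=
  Real.sqrt_pos.mpr (sum_sq_pos v hv)

lemma norm2_sq (v : Fin 2 → ℝ) : norm2 v ^ 2 = ∑ i, v i ^ 2 :=
  Real.sq_sqrt (Finset.sum_nonneg fun i _ => sq_nonneg _)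

lemma hasFDerivAt_norm2 (v : Fin 2 → ℝ) (hv : v ≠ 0) :
    HasFDerivAt norm2 ((1 / (2 * norm2 v)) •
      (∑ i : Fin 2, (v i • ContinuousLinearMap.proj (R := ℝ) (φ := fun _ : Fin 2 => ℝ) i
        + v i • ContinuousLinearMap.proj (R := ℝ) (φ := fun _ : Fin 2 => ℝ) i))) v := by
  have hq : HasFDerivAt (fun u : Fin 2 → ℝ => ∑ i, u i ^ 2)
      (∑ i : Fin 2, (v i • ContinuousLinearMap.proj (R := ℝ) (φ := fun _ : Fin 2 => ℝ) i
        + v i • ContinuousLinearMap.proj (R := ℝ) (φ := fun _ : Fin 2 => ℝ) i)) v := by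
    have h : (fun u : Fin 2 → ℝ => ∑ i, u i ^ 2) = fun u => ∑ i, u i * u i := by
      funext u; simp [sq]
    rw [h]
    refine HasFDerivAt.fun_sum fun i _ => ?_
    exact ((ContinuousLinearMap.proj (R := ℝ) (φ := fun _ : Fin 2 => ℝ) i).hasFDerivAt (x := v)).mul
      ((ContinuousLinearMap.proj (R := ℝ) (φ := fun _ : Fin 2 => ℝ) i).hasFDerivAt (x := v))
  have hs := Real.hasDerivAt_sqrt (ne_of_gt (sum_sq_pos v hv))
  exact hs.comp_hasFDerivAt v hq

lemma pD_eq (φ dm dt dl : ℝ) (v : Fin 2 → ℝ) (hv : v ≠ 0) (i j k : Fin 2) :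
    pD φ dm dt dl v i j k =
      dt * (v k / norm2 v) * (if i = j then (1:ℝ) else 0)
      + (dl - dt) * (((if i = k then (1:ℝ) else 0) * v j + v i * (if j = k then (1:ℝ) else 0)) / norm2 v
          - v i * v j * v k / norm2 v ^ 3) := by
  have hr := norm2_pos v hv
  have hN := hasFDerivAt_norm2 v hv
  have hinv := (hasDerivAt_inv (ne_of_gt hr)).comp_hasFDerivAt v hN
  have hD := (((hN.const_mul dt).const_add (φ*dm)).mul_const (if i = j then (1:ℝ) else 0)).add
      (((((ContinuousLinearMap.proj (R := ℝ) (φ := fun _ : Fin 2 => ℝ) i).hasFDerivAt (x := v)).const_mul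
          (dl - dt)).mul
        ((ContinuousLinearMap.proj (R := ℝ) (φ := fun _ : Fin 2 => ℝ) j).hasFDerivAt (x := v))).mul hinv)
  have hD' : HasFDerivAt (fun u => bsD φ dm dt dl u i j) _ v := hD
  rw [pD, hD'.fderiv]
  simp only [ContinuousLinearMap.add_apply, ContinuousLinearMap.smul_apply,
    ContinuousLinearMap.coe_smul', Pi.smul_apply, ContinuousLinearMap.sub_apply,
    ContinuousLinearMap.sum_apply, ContinuousLinearMap.proj_apply, Pi.single_apply,
    smul_eq_mul, Fin.sum_univ_two]
  simp only [Function.comp_apply, Pi.mul_apply, ContinuousLinearMap.proj_apply]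
  have hrne : norm2 v ≠ 0 := ne_of_gt hr
  have hvk : v 0 * (if (0:Fin 2) = k then (1:ℝ) else 0) + v 1 * (if (1:Fin 2) = k then (1:ℝ) else 0) = v k := by
    fin_cases k <;> simp
  rw [← hvk]
  clear hD hD' hN hinv hvk
  generalize (if i = j then (1:ℝ) else 0) = a
  generalize (if i = k then (1:ℝ) else 0) = b
  generalize (if j = k then (1:ℝ) else 0) = c
  generalize (if (0:Fin 2) = k then (1:ℝ) else 0) = t0
  generalize (if (1:Fin 2) = k then (1:ℝ) else 0) = t1
  field_simp
  ring

theorem stmt8 (φ dm dt dl : ℝ) (hφ : 0 < φ) (hdm : 0 < dm) (hdt : 0 < dt) (hdl : 0 < dl)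
    (n v g w : Fin 2 → ℝ) (hn : ∑ i, n i ^ 2 = 1) (hv : v ≠ 0)
    (hvn : ∑ i, v i * n i = 0)
    (hg : ∑ i, (∑ j, bsD φ dm dt dl v i j * g j) * n i = 0)
    (hw : ∑ i, (∑ j, bsD φ dm dt dl v i j * w j) * n i = 0) :
    ∑ k, n k * ∑ i, (∑ j, pD φ dm dt dl v i j k * g j) * w i = 0 := by
  have hr := norm2_pos v hv
  have hrne : norm2 v ≠ 0 := ne_of_gt hr
  rw [Fin.sum_univ_two] at hvn
  -- rewrite flux conditions
  have key : ∀ u : Fin 2 → ℝ, (∑ i, (∑ j, bsD φ dm dt dl v i j * u j) * n i)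
      = (φ*dm + dt*norm2 v) * (u 0 * n 0 + u 1 * n 1)
        + (dl - dt) * (v 0 * u 0 + v 1 * u 1) * (v 0 * n 0 + v 1 * n 1) / norm2 v := by
    intro u
    simp only [bsD, Fin.sum_univ_two]
    norm_num
    field_simp
    ring
  have hpos : 0 < φ*dm + dt*norm2 v := by positivity
  have hgn : g 0 * n 0 + g 1 * n 1 = 0 := by
    rw [key g, hvn] at hg
    simp only [mul_zero, zero_div, add_zero] at hg
    exact (mul_eq_zero.mp hg).resolve_left (ne_of_gt hpos)
  have hwn : w 0 * n 0 + w 1 * n 1 = 0 := by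
    rw [key w, hvn] at hw
    simp only [mul_zero, zero_div, add_zero] at hw
    exact (mul_eq_zero.mp hw).resolve_left (ne_of_gt hpos)
  have expand : (∑ k, n k * ∑ i, (∑ j, pD φ dm dt dl v i j k * g j) * w i)
      = dt * ((v 0 * n 0 + v 1 * n 1) / norm2 v) * (g 0 * w 0 + g 1 * w 1)
        + (dl - dt) * (((w 0 * n 0 + w 1 * n 1) * (v 0 * g 0 + v 1 * g 1)
            + (g 0 * n 0 + g 1 * n 1) * (v 0 * w 0 + v 1 * w 1)) / norm2 v
          - (v 0 * g 0 + v 1 * g 1) * (v 0 * w 0 + v 1 * w 1) * (v 0 * n 0 + v 1 * n 1) / norm2 v ^ 3) := by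
    simp only [pD_eq φ dm dt dl v hv, Fin.sum_univ_two]
    norm_num
    field_simp
    ring
  rw [expand, hvn, hgn, hwn]
  simp
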